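/- For strictly increasing f : {0,…,b−1} → {0,…,b'−1}, the map A(f) defined on Ackermann normal forms by A(f)(F_{b_{k-1}}^{1+n_{k-1}} ∘ ⋯ ∘ F_{b_0}^{1+n_0}(1)) = F_{f(b_{k-1})}^{1+A(f)(n_{k-1})} ∘ ⋯ ∘ F_{f(b_0)}^{1+A(f)(n_0)}(1), with A(f)(0) = 0, is strictly increasing on {0,…,F_b(1)−1}, takes values in {0,…,F_{b'}(1)−1}, and preserves Ackermann normal forms. -/

import Mathlib

/-- The fast-growing hierarchy: `F 0 n = n + 1` and `F (b+1) n = (F b)^[1+n] n`. -/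
def F : ℕ → ℕ → ℕ
  | 0, n => n + 1
  | b + 1, n => (F b)^[1 + n] n

/-- `evalANF [(b₀,n₀),…,(b_{k-1},n_{k-1})] = F_{b_{k-1}}^[1+n_{k-1}] ∘ ⋯ ∘ F_{b₀}^[1+n₀] (1)`:
the list records the innermost pair first. -/
def evalANF (l : List (ℕ × ℕ)) : ℕ :=
  l.foldl (fun m p => (F p.1)^[1 + p.2] m) 1

/-- `l` is an Ackermann normal form: the indices `b_{k-1} < ⋯ < b₀` are strictly decreasing
along the list (which starts with the innermost pair `(b₀,n₀)`), and each exponent `n_i`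
is smaller than the value of the composition of the earlier (inner) pairs applied to `1`. -/
def IsANF (l : List (ℕ × ℕ)) : Prop :=
  l.Chain' (fun p q => q.1 < p.1) ∧
  ∀ i (h : i < l.length), (l.get ⟨i, h⟩).2 < evalANF (l.take i)

lemma F_lt : ∀ c n, n < F c n := by
  intro c
  induction c with
  | zero => intro n; simp [F]
  | succ c ih =>
    intro n
    have hle : ∀ k x, x ≤ (F c)^[k] x := by
      intro k
      induction k with
      | zero => intro x; simp
      | succ k ihk =>
        intro x
        rw [Function.iterate_succ_apply']
        exact le_trans (ihk x) (le_of_lt (ih _))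
    show n < (F c)^[1 + n] n
    rw [Nat.add_comm, Function.iterate_succ_apply']
    exact lt_of_le_of_lt (hle n n) (ih _)

lemma le_iterF (c k x : ℕ) : x ≤ (F c)^[k] x := by
  induction k with
  | zero => simp
  | succ k ih =>
    rw [Function.iterate_succ_apply']
    exact le_trans ih (le_of_lt (F_lt _ _))

lemma iterF_lt_iterF (c x : ℕ) {j k : ℕ} (h : j < k) :
    (F c)^[j] x < (F c)^[k] x := by
  obtain ⟨s, rfl⟩ := Nat.exists_eq_add_of_lt h
  rw [show j + s + 1 = (s+1) + j by ring, Function.iterate_add_apply]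
  calc (F c)^[j] x < F c ((F c)^[j] x) := F_lt _ _
    _ ≤ (F c)^[s+1] ((F c)^[j] x) := by
        rw [Function.iterate_succ_apply]
        exact le_iterF _ _ _

lemma iterF_le_iterF (c x : ℕ) {j k : ℕ} (h : j ≤ k) :
    (F c)^[j] x ≤ (F c)^[k] x := by
  rcases eq_or_lt_of_le h with rfl | h
  · exact le_rfl
  · exact le_of_lt (iterF_lt_iterF c x h)

lemma F_strictMono (c : ℕ) : StrictMono (F c) := by
  induction c with
  | zero => intro m n h; simpa [F] using h
  | succ c ih =>
    intro m n h
    show (F c)^[1 + m] m < (F c)^[1 + n] n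
    calc (F c)^[1 + m] m ≤ (F c)^[1 + m] n := (ih.monotone.iterate _) h.le
      _ < (F c)^[1 + n] n := iterF_lt_iterF c n (by omega)

lemma iterF_mono (c k : ℕ) : Monotone ((F c)^[k]) :=
  (F_strictMono c).monotone.iterate k

lemma F1_ge (c : ℕ) : c + 2 ≤ F c 1 := by
  induction c with
  | zero => simp [F]
  | succ c ih =>
    show c + 3 ≤ (F c)^[1+1] 1
    have h1 : F c 1 < F c (F c 1) := F_strictMono c (by omega)
    have h2 : (F c)^[1+1] 1 = F c (F c 1) := by
      rw [Function.iterate_succ_apply', Function.iterate_one]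
    omega

def Orb (c m : ℕ) : Prop := ∃ k, (F c)^[k] 1 = m

lemma orb_one (c : ℕ) : Orb c 1 := ⟨0, rfl⟩

lemma Orb.pos {c m : ℕ} (h : Orb c m) : 1 ≤ m := by
  obtain ⟨k, rfl⟩ := h; exact le_iterF c k 1

lemma Orb.applyIter {c m : ℕ} (h : Orb c m) (k : ℕ) : Orb c ((F c)^[k] m) := by
  obtain ⟨j, rfl⟩ := h; exact ⟨k + j, (Function.iterate_add_apply _ _ _ _)⟩

lemma Orb.applyF {c m : ℕ} (h : Orb c m) : Orb c (F c m) := by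
  simpa using h.applyIter 1

lemma Orb.succ_le {c x y : ℕ} (hx : Orb c x) (hy : Orb c y) (h : x < y) :
    F c x ≤ y := by
  obtain ⟨i, rfl⟩ := hx
  obtain ⟨j, rfl⟩ := hy
  have hij : i < j := by
    by_contra hc
    exact absurd (iterF_le_iterF c 1 (Nat.le_of_not_lt hc)) (by omega)
  have : (F c)^[i+1] 1 ≤ (F c)^[j] 1 := iterF_le_iterF c 1 (by omega)
  rwa [Function.iterate_succ_apply'] at this

lemma Orb.exists_iter {c x y : ℕ} (hx : Orb c x) (hy : Orb c y) (h : x ≤ y) :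
    ∃ j, (F c)^[j] x = y := by
  obtain ⟨i, rfl⟩ := hx
  obtain ⟨j, rfl⟩ := hy
  have hij : i ≤ j := by
    by_contra hc
    exact absurd (iterF_lt_iterF c 1 (Nat.lt_of_not_le hc)) (by omega)
  exact ⟨j - i, by rw [← Function.iterate_add_apply]; congr 1; omega⟩

lemma Orb.down {c m : ℕ} (h : Orb (c + 1) m) : Orb c m := by
  obtain ⟨k, rfl⟩ := h
  induction k with
  | zero => exact orb_one c
  | succ k ih =>
    rw [Function.iterate_succ_apply']
    set x := (F (c+1))^[k] 1 with hx
    show Orb c ((F c)^[1 + x] x)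
    exact ih.applyIter _

lemma Orb.of_le {c c' m : ℕ} (h : c ≤ c') (hm : Orb c' m) : Orb c m := by
  induction c' with
  | zero => rwa [Nat.le_zero.mp h]
  | succ c' ih =>
    rcases Nat.lt_or_ge c (c' + 1) with h' | h'
    · exact ih (by omega) hm.down
    · have : c = c' + 1 := by omega
      rwa [this]

lemma orb_F1 {c b : ℕ} (h : c ≤ b) : Orb c (F b 1) :=
  Orb.of_le h ⟨1, Function.iterate_one _ ▸ rfl⟩

lemma orb_top {b m : ℕ} (h : Orb b m) (h1 : 1 < m) (h2 : m < F b 1) : False := by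
  obtain ⟨k, rfl⟩ := h
  rcases k with _ | k
  · simp at h1
  · have : (F b)^[1] 1 ≤ (F b)^[k+1] 1 := iterF_le_iterF b 1 (by omega)
    rw [Function.iterate_one] at this
    omega

lemma orb_zero_all {m : ℕ} (h : 1 ≤ m) : Orb 0 m := by
  refine ⟨m - 1, ?_⟩
  have : ∀ k x, (F 0)^[k] x = x + k := by
    intro k
    induction k with
    | zero => simp
    | succ k ih => intro x; rw [Function.iterate_succ_apply', ih]; simp [F]; omega
  rw [this]; omega

lemma orb_le_self {c m : ℕ} (h : Orb c m) (h2 : 2 ≤ m) : c ≤ m := by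
  obtain ⟨k, hk⟩ := h
  rcases k with _ | k
  · simp at hk; omega
  · have h1 : (F c)^[1] 1 ≤ (F c)^[k+1] 1 := iterF_le_iterF c 1 (by omega)
    rw [Function.iterate_one] at h1
    rw [hk] at h1
    have := F1_ge c
    omega

open Classical in
noncomputable def dd (m : ℕ) : ℕ := Nat.findGreatest (fun c => Orb c m) m

open Classical in
noncomputable def vv (m : ℕ) : ℕ :=
  Nat.findGreatest (fun x => x < m ∧ Orb (dd m + 1) x) m

noncomputable def jj (m : ℕ) : ℕ := sInf {j | (F (dd m))^[j] (vv m) = m}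

noncomputable def nn (m : ℕ) : ℕ := jj m - 1

lemma dd_spec {m : ℕ} (h : 2 ≤ m) : Orb (dd m) m := by
  classical
  exact Nat.findGreatest_spec (P := fun c => Orb c m) (Nat.zero_le m)
    (orb_zero_all (by omega))

lemma dd_max {m c : ℕ} (h : 2 ≤ m) (hc : Orb c m) : c ≤ dd m := by
  classical
  by_contra hlt
  push_neg at hlt
  exact Nat.findGreatest_is_greatest (P := fun c => Orb c m) (n := m) hlt
    (orb_le_self hc h) hc

lemma dd_lt {b m : ℕ} (h : 2 ≤ m) (hm : m < F b 1) : dd m < b := by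
  by_contra hc
  exact orb_top (Orb.of_le (Nat.le_of_not_lt hc) (dd_spec h)) (by omega) hm

lemma vv_spec {m : ℕ} (h : 2 ≤ m) : vv m < m ∧ Orb (dd m + 1) (vv m) := by
  classical
  exact Nat.findGreatest_spec (P := fun x => x < m ∧ Orb (dd m + 1) x)
    (show 1 ≤ m by omega) ⟨by omega, orb_one _⟩

lemma vv_max {m x : ℕ} (h : 2 ≤ m) (hx : x < m) (ho : Orb (dd m + 1) x) :
    x ≤ vv m := by
  classical
  by_contra hlt
  exact absurd ⟨hx, ho⟩
    (Nat.findGreatest_is_greatest (Nat.lt_of_not_le hlt) (by omega))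

lemma not_orb_dd_succ {m : ℕ} (h : 2 ≤ m) : ¬ Orb (dd m + 1) m := by
  intro hc
  have := dd_max h hc
  omega

lemma m_lt_F_vv {m : ℕ} (h : 2 ≤ m) : m < F (dd m + 1) (vv m) := by
  obtain ⟨hvlt, hvo⟩ := vv_spec h
  by_contra hc
  have hy : Orb (dd m + 1) (F (dd m + 1) (vv m)) := hvo.applyF
  have hne : F (dd m + 1) (vv m) ≠ m := by
    intro he
    rw [he] at hy
    exact not_orb_dd_succ h hy
  have hlt : F (dd m + 1) (vv m) < m := by omega
  have := vv_max h hlt hy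
  have := F_lt (dd m + 1) (vv m)
  omega

lemma jj_spec {m : ℕ} (h : 2 ≤ m) : (F (dd m))^[jj m] (vv m) = m := by
  have hvo : Orb (dd m) (vv m) := (vv_spec h).2.down
  have hne : {j | (F (dd m))^[j] (vv m) = m}.Nonempty :=
    hvo.exists_iter (dd_spec h) (le_of_lt (vv_spec h).1)
  exact Nat.sInf_mem hne

lemma jj_pos {m : ℕ} (h : 2 ≤ m) : 1 ≤ jj m := by
  by_contra hc
  have := jj_spec h
  have hj : jj m = 0 := by omega
  rw [hj] at this
  simp at this
  have := (vv_spec h).1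
  omega

lemma m_eq_decomp {m : ℕ} (h : 2 ≤ m) : (F (dd m))^[1 + nn m] (vv m) = m := by
  have := jj_spec h
  have := jj_pos h
  have heq : 1 + nn m = jj m := by unfold nn; omega
  rwa [heq]

lemma nn_lt_vv {m : ℕ} (h : 2 ≤ m) : nn m < vv m := by
  have hm := m_eq_decomp h
  have hlt := m_lt_F_vv h
  have : F (dd m + 1) (vv m) = (F (dd m))^[1 + vv m] (vv m) := rfl
  rw [this] at hlt
  by_contra hc
  have : (F (dd m))^[1 + vv m] (vv m) ≤ (F (dd m))^[1 + nn m] (vv m) :=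
    iterF_le_iterF _ _ (by omega)
  omega

lemma vv_lt {m : ℕ} (h : 1 ≤ m) : vv m < m := by
  classical
  rcases Nat.lt_or_ge m 2 with h2 | h2
  · have hm : m = 1 := by omega
    subst hm
    have : vv 1 = 0 := by
      rw [vv, Nat.findGreatest_eq_zero_iff]
      intro k hk hk1 hp
      exact absurd hp.1 (by omega)
    omega
  · exact (vv_spec h2).1

lemma add_le_iterF (c k x : ℕ) : k + x ≤ (F c)^[k] x := by
  induction k with
  | zero => simp
  | succ k ih =>
    rw [Function.iterate_succ_apply']
    have := F_lt c ((F c)^[k] x)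
    omega

lemma nn_lt {m : ℕ} (h : 2 ≤ m) : nn m < m := by
  have hj := jj_spec h
  have : jj m + vv m ≤ (F (dd m))^[jj m] (vv m) := add_le_iterF _ _ _
  unfold nn
  omega

lemma decomp_unique {m d n v : ℕ} (hv : Orb (d + 1) v) (hn : n < v)
    (hm : (F d)^[1 + n] v = m) :
    2 ≤ m ∧ dd m = d ∧ vv m = v ∧ nn m = n := by
  have hv1 : 1 ≤ v := hv.pos
  have hvm : v < m := by
    rw [← hm]
    exact lt_of_lt_of_le (iterF_lt_iterF d v (show 0 < 1 + n by omega))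
      (le_refl _) |>.trans_le (le_refl _)
  have h2 : 2 ≤ m := by omega
  have hom : Orb d m := hm ▸ (hv.down.applyIter (1 + n))
  have hmlt : m < F (d + 1) v := by
    rw [← hm]
    show (F d)^[1 + n] v < (F d)^[1 + v] v
    exact iterF_lt_iterF d v (by omega)
  have hnotorb : ¬ Orb (d + 1) m := by
    intro hc
    have hle : F (d + 1) v ≤ m := hv.succ_le hc hvm
    omega
  have hdd : dd m = d := by
    have h1 : d ≤ dd m := dd_max h2 hom
    have h2' : dd m ≤ d := by
      by_contra hc
      exact hnotorb (Orb.of_le (by omega) (dd_spec h2))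
    omega
  have hvv : vv m = v := by
    have h1 : v ≤ vv m := vv_max h2 hvm (by rw [hdd]; exact hv)
    have hvvlt := (vv_spec h2).1
    have hvvorb := (vv_spec h2).2
    rw [hdd] at hvvorb
    by_contra hc
    have hvlt : v < vv m := by omega
    have := hv.succ_le hvvorb hvlt
    omega
  have hnn : nn m = n := by
    have hd := m_eq_decomp h2
    rw [hdd, hvv] at hd
    have heq : (F d)^[1 + nn m] v = (F d)^[1 + n] v := hd.trans hm.symm
    by_contra hc
    rcases Nat.lt_or_ge (1 + nn m) (1 + n) with hlt | hge
    · exact absurd heq (Nat.ne_of_lt (iterF_lt_iterF d v hlt))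
    · exact absurd heq (Nat.ne_of_gt (iterF_lt_iterF d v (by omega)))
  exact ⟨h2, hdd, hvv, hnn⟩

noncomputable def Amap (f : ℕ → ℕ) : ℕ → ℕ
  | m =>
    if h : m ≤ 1 then m
    else
      have h2 : 2 ≤ m := by omega
      have _ : nn m < m := nn_lt h2
      have _ : vv m < m := vv_lt (by omega)
      (F (f (dd m)))^[1 + Amap f (nn m)] (Amap f (vv m))

lemma Amap_le_one {f : ℕ → ℕ} {m : ℕ} (h : m ≤ 1) : Amap f m = m := by
  rw [Amap]
  simp [h]

lemma Amap_eq {f : ℕ → ℕ} {m : ℕ} (h : 2 ≤ m) :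
    Amap f m = (F (f (dd m)))^[1 + Amap f (nn m)] (Amap f (vv m)) := by
  rw [Amap]
  simp [show ¬ m ≤ 1 by omega]

lemma Amap_pos {f : ℕ → ℕ} : ∀ m, 1 ≤ m → 1 ≤ Amap f m := by
  intro m
  induction m using Nat.strong_induction_on with
  | _ m ih =>
    intro h1
    rcases Nat.lt_or_ge m 2 with h2 | h2
    · rw [Amap_le_one (by omega)]; omega
    · rw [Amap_eq h2]
      have hv1 : 1 ≤ vv m := (vv_spec h2).2.pos
      calc 1 ≤ Amap f (vv m) := ih (vv m) (vv_lt (by omega)) hv1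
        _ ≤ _ := le_iterF _ _ _

section Main

variable {b b' : ℕ} {f : ℕ → ℕ}

lemma main_lemma
    (hmono : ∀ m n, m < n → n < b → f m < f n)
    (hbound : ∀ n, n < b → f n < b') :
    ∀ m, m < F b 1 →
    (∀ c, c < b → Orb (c+1) m → Orb (f c + 1) (Amap f m)) ∧
    Amap f m < F b' 1 ∧
    (∀ k, k < m → Amap f k < Amap f m) := by
  intro m
  induction m using Nat.strong_induction_on with
  | _ m ih =>
    intro hmF
    rcases Nat.lt_or_ge m 2 with h2 | h2
    · refine ⟨?_, ?_, ?_⟩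
      · intro c hc horb
        interval_cases m
        · exact absurd horb.pos (by omega)
        · rw [Amap_le_one (by omega)]; exact orb_one _
      · rw [Amap_le_one (by omega)]
        have := F1_ge b'
        omega
      · intro k hk
        have hm1 : m = 1 := by omega
        have hk0 : k = 0 := by omega
        subst hm1; subst hk0
        rw [Amap_le_one le_rfl, Amap_le_one (by omega)]
        omega
    · set d := dd m with hd
      have hdlt : d < b := dd_lt h2 hmF
      have hvo : Orb (d+1) (vv m) := (vv_spec h2).2
      have hvltm : vv m < m := (vv_spec h2).1
      have hv1 : 1 ≤ vv m := hvo.pos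
      have hnv : nn m < vv m := nn_lt_vv h2
      have hmd : (F d)^[1 + nn m] (vv m) = m := m_eq_decomp h2
      have hAeq : Amap f m = (F (f d))^[1 + Amap f (nn m)] (Amap f (vv m)) :=
        Amap_eq h2
      obtain ⟨ihv_orb, ihv_lt, ihv_mono⟩ := ih (vv m) hvltm (by omega)
      have hAvo : Orb (f d + 1) (Amap f (vv m)) := ihv_orb d hdlt hvo
      have hAnv : Amap f (nn m) < Amap f (vv m) := ihv_mono _ hnv
      have hAvpos : 1 ≤ Amap f (vv m) := Amap_pos _ hv1
      have hAmBound : Amap f m < F (f d + 1) (Amap f (vv m)) := by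
        rw [hAeq]
        exact iterF_lt_iterF _ _ (show 1 + Amap f (nn m) < 1 + Amap f (vv m) by omega)
      have hAvAm : Amap f (vv m) < Amap f m := by
        rw [hAeq]
        have := iterF_lt_iterF (f d) (Amap f (vv m))
          (show 0 < 1 + Amap f (nn m) by omega)
        simpa using this
      have Porb : ∀ c, c < b → Orb (c+1) m → Orb (f c + 1) (Amap f m) := by
        intro c hc horb
        have hcd : c + 1 ≤ d := dd_max h2 horb
        have h1 : Orb (f d) (Amap f m) := by
          rw [hAeq]
          exact (hAvo.down).applyIter _
        have hfc : f c < f d := hmono c d (by omega) hdlt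
        exact Orb.of_le (by omega) h1
      have P3 : Amap f m < F b' 1 := by
        have hfd : f d < b' := hbound d hdlt
        have hF1o : Orb (f d + 1) (F b' 1) := orb_F1 (by omega)
        have := hAvo.succ_le hF1o ihv_lt
        omega
      refine ⟨Porb, P3, ?_⟩
      intro k
      induction k using Nat.strong_induction_on with
      | _ k ihk =>
        intro hkm
        rcases Nat.lt_or_ge k 2 with hk2 | hk2
        · rw [Amap_le_one (by omega)]
          omega
        · rcases Nat.lt_or_ge (vv m) k with hkv | hkv
          · -- vv m < k < m
            have hknot : ¬ Orb (d+1) k := by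
              intro hc
              have := vv_max h2 hkm hc
              omega
            have hdk : dd k ≤ d := by
              by_contra hc
              exact hknot (Orb.of_le (by omega) (dd_spec hk2))
            have hkvo : Orb (dd k + 1) (vv k) := (vv_spec hk2).2
            have hkvlt : vv k < k := (vv_spec hk2).1
            have hknv : nn k < vv k := nn_lt_vv hk2
            have hkeq : Amap f k =
                (F (f (dd k)))^[1 + Amap f (nn k)] (Amap f (vv k)) := Amap_eq hk2
            obtain ⟨ihkv_orb, ihkv_lt, ihkv_mono⟩ := ih (vv k) (by omega) (by omega)
            have hAknv : Amap f (nn k) < Amap f (vv k) := ihkv_mono _ hknv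
            rcases eq_or_lt_of_le hdk with hdd_eq | hdd_lt
            · have hvvk : vv k = vv m := by
                have ha : vv m ≤ vv k := vv_max hk2 (by omega) (by rw [hdd_eq]; exact hvo)
                have hb2 : vv k ≤ vv m := vv_max h2 (by omega)
                  (by rw [hdd_eq, hd] at hkvo; exact hkvo)
                omega
              have hkd : (F d)^[1 + nn k] (vv m) = k := by
                have hx := m_eq_decomp hk2
                rw [hdd_eq, hvvk] at hx
                exact hx
              have hnnlt : nn k < nn m := by
                by_contra hc
                have : (F d)^[1 + nn m] (vv m) ≤ (F d)^[1 + nn k] (vv m) :=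
                  iterF_le_iterF _ _ (by omega)
                omega
              have hAnn : Amap f (nn k) < Amap f (nn m) := by
                obtain ⟨_, _, ihn_mono⟩ := ih (nn m) (by omega) (by omega)
                exact ihn_mono _ hnnlt
              rw [hkeq, hAeq, hdd_eq, hvvk]
              exact iterF_lt_iterF _ _ (by omega)
            · have hbound_k : Amap f k < F (f (dd k) + 1) (Amap f (vv k)) := by
                rw [hkeq]
                exact iterF_lt_iterF _ _
                  (show 1 + Amap f (nn k) < 1 + Amap f (vv k) by omega)
              have hAkvo : Orb (f (dd k) + 1) (Amap f (vv k)) :=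
                ihkv_orb (dd k) (by omega) hkvo
              have hAmo : Orb (f (dd k) + 1) (Amap f m) :=
                Porb (dd k) (by omega) (Orb.of_le (by omega) (dd_spec h2))
              have hAkv_lt : Amap f (vv k) < Amap f m := ihk (vv k) hkvlt (by omega)
              have := hAkvo.succ_le hAmo hAkv_lt
              omega
          · -- k ≤ vv m
            rcases eq_or_lt_of_le hkv with he | hlt
            · rw [he]; exact hAvAm
            · exact lt_trans (ihv_mono k hlt) hAvAm

end Main

section Lists

lemma evalANF_nil : evalANF [] = 1 := rfl

lemma evalANF_append (l : List (ℕ × ℕ)) (p : ℕ × ℕ) :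
    evalANF (l ++ [p]) = (F p.1)^[1 + p.2] (evalANF l) := by
  unfold evalANF
  rw [List.foldl_append]
  rfl

lemma foldl_ge (l : List (ℕ × ℕ)) : ∀ v : ℕ,
    v ≤ l.foldl (fun m p => (F p.1)^[1 + p.2] m) v := by
  induction l with
  | nil => intro v; simp
  | cons p l ih =>
    intro v
    calc v ≤ (F p.1)^[1 + p.2] v := le_iterF _ _ _
      _ ≤ _ := ih _

lemma evalANF_pos (l : List (ℕ × ℕ)) : 1 ≤ evalANF l := foldl_ge l 1

local instance : IsTrans (ℕ × ℕ) (fun p q : ℕ × ℕ => q.1 < p.1) :=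
  ⟨fun _ _ _ h1 h2 => lt_trans h2 h1⟩

lemma isANF_concat {l : List (ℕ × ℕ)} {p : ℕ × ℕ} :
    IsANF (l ++ [p]) ↔ IsANF l ∧ (∀ q ∈ l, p.1 < q.1) ∧ p.2 < evalANF l := by
  unfold IsANF List.Chain'
  rw [List.isChain_iff_pairwise, List.isChain_iff_pairwise, List.pairwise_append]
  simp only [List.pairwise_singleton, List.mem_singleton, true_and]
  constructor
  · rintro ⟨⟨hp, hrel⟩, hexp⟩
    refine ⟨⟨hp, ?_⟩, ?_, ?_⟩
    · intro i hi
      have hi' : i < (l ++ [p]).length := by simp; omega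
      have h := hexp i hi'
      rw [List.get_eq_getElem, List.getElem_append_left hi,
        List.take_append_of_le_length (by omega)] at h
      simpa using h
    · intro q hq
      exact hrel q hq p rfl
    · have h := hexp l.length (by simp)
      simpa using h
  · rintro ⟨⟨hp, hexp⟩, hrel, hpexp⟩
    refine ⟨⟨hp, fun a ha b hb => hb ▸ hrel a ha⟩, ?_⟩
    intro i hi
    rcases Nat.lt_or_ge i l.length with hil | hil
    · rw [List.get_eq_getElem, List.getElem_append_left hil,
        List.take_append_of_le_length (by omega)]
      simpa using hexp i hil
    · have hie : i = l.length := by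
        have := hi
        simp at this
        omega
      subst hie
      simpa using hpexp

lemma evalANF_orb {l : List (ℕ × ℕ)} (hc : l.Chain' (fun p q => q.1 < p.1)) :
    ∀ c, (∀ p ∈ l, c ≤ p.1) → Orb c (evalANF l) := by
  induction l using List.reverseRecOn with
  | nil => intro c _; exact orb_one c
  | append_singleton l q ih =>
    intro c hcle
    have hpw := List.isChain_iff_pairwise.mp hc
    rw [List.pairwise_append] at hpw
    have hc' : l.Chain' (fun p q => q.1 < p.1) :=
      List.isChain_iff_pairwise.mpr hpw.1
    have hgt : ∀ p ∈ l, q.1 < p.1 := by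
      intro p hp
      exact hpw.2.2 p hp q (List.mem_singleton_self q)
    have hih : Orb (q.1 + 1) (evalANF l) := ih hc' (q.1 + 1) (fun p hp => hgt p hp)
    rw [evalANF_append]
    have : Orb q.1 ((F q.1)^[1 + q.2] (evalANF l)) := (hih.down).applyIter _
    exact Orb.of_le (hcle q (by simp)) this

lemma F1_mono {c c' : ℕ} (h : c ≤ c') : F c 1 ≤ F c' 1 := by
  induction c' with
  | zero =>
    have : c = 0 := by omega
    rw [this]
  | succ c' ih =>
    rcases Nat.lt_or_ge c (c' + 1) with h' | h'
    · refine le_trans (ih (by omega)) ?_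
      show F c' 1 ≤ (F c')^[1+1] 1
      have := iterF_le_iterF c' 1 (show 1 ≤ 1 + 1 by omega)
      rwa [Function.iterate_one] at this
    · have : c = c' + 1 := by omega
      rw [this]

lemma idx_lt_b {b : ℕ} {l : List (ℕ × ℕ)} (h : IsANF l)
    (hlt : evalANF l < F b 1) : ∀ p ∈ l, p.1 < b := by
  rcases l with _ | ⟨hd, tl⟩
  · intro p hp; simp at hp
  · have hn0 : hd.2 = 0 := by
      have := h.2 0 (by simp)
      simp [evalANF] at this
      omega
    have hge : F hd.1 1 ≤ evalANF (hd :: tl) := by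
      show F hd.1 1 ≤ List.foldl _ 1 (hd :: tl)
      rw [List.foldl_cons]
      calc F hd.1 1 = (F hd.1)^[1 + hd.2] 1 := by
            rw [hn0]; simp
        _ ≤ _ := foldl_ge tl _
    have hhd : hd.1 < b := by
      by_contra hc
      have := F1_mono (show b ≤ hd.1 by omega)
      omega
    intro p hp
    rcases List.mem_cons.mp hp with rfl | hp'
    · exact hhd
    · have hpw := List.isChain_iff_pairwise.mp h.1
      rw [List.pairwise_cons] at hpw
      have := hpw.1 p hp'
      omega

end Lists

lemma clause2 {b b' : ℕ} {f : ℕ → ℕ}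
    (hmono : ∀ m n, m < n → n < b → f m < f n)
    (hbound : ∀ n, n < b → f n < b') :
    ∀ l : List (ℕ × ℕ), IsANF l → evalANF l < F b 1 →
      Amap f (evalANF l) = evalANF (l.map fun p => (f p.1, Amap f p.2)) ∧
      IsANF (l.map fun p => (f p.1, Amap f p.2)) := by
  intro l
  induction l using List.reverseRecOn with
  | nil =>
    intro _ _
    constructor
    · rw [evalANF_nil, Amap_le_one le_rfl]; rfl
    · exact ⟨List.isChain_nil, by intro i h; simp at h⟩
  | append_singleton l q ih =>
    intro hANF hlt
    obtain ⟨hANFl, hqgt, hqexp⟩ := isANF_concat.mp hANF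
    set v := evalANF l with hv
    have hvle : v ≤ evalANF (l ++ [q]) := by
      rw [evalANF_append]; exact le_iterF _ _ _
    have hvlt : v < F b 1 := by omega
    obtain ⟨ihEq, ihANF⟩ := ih hANFl hvlt
    have hvo : Orb (q.1 + 1) v :=
      evalANF_orb hANFl.1 (q.1 + 1) (fun p hp => hqgt p hp)
    have hm : (F q.1)^[1 + q.2] v = evalANF (l ++ [q]) := (evalANF_append l q).symm
    obtain ⟨h2m, hdd, hvv, hnn⟩ := decomp_unique hvo hqexp hm
    have hAeq : Amap f (evalANF (l ++ [q])) =
        (F (f q.1))^[1 + Amap f q.2] (Amap f v) := by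
      rw [Amap_eq h2m, hdd, hvv, hnn]
    have hmap : (l ++ [q]).map (fun p => (f p.1, Amap f p.2)) =
        (l.map fun p => (f p.1, Amap f p.2)) ++ [(f q.1, Amap f q.2)] := by
      simp
    have hAq2 : Amap f q.2 < Amap f v :=
      ((main_lemma hmono hbound v hvlt).2.2) q.2 hqexp
    constructor
    · rw [hAeq, hmap, evalANF_append, ihEq]
    · rw [hmap]
      refine isANF_concat.mpr ⟨ihANF, ?_, ?_⟩
      · intro p hp
        obtain ⟨r, hr, rfl⟩ := List.mem_map.mp hp
        have hrb : r.1 < b := idx_lt_b hANF hlt r (by simp [hr])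
        exact hmono q.1 r.1 (hqgt r hr) hrb
      · rw [← ihEq]; exact hAq2


/-- For strictly increasing `f : {0,…,b−1} → {0,…,b'−1}`, there is a map `A f` on
`{0,…,F_b(1)−1}` with `A f 0 = 0` that acts on Ackermann normal forms by applying `f` to
the indices and itself recursively to the exponents; it preserves Ackermann normal forms,
takes values below `F_{b'}(1)`, and is strictly increasing below `F_b(1)`. -/
theorem ackermannDilator_morphism (b b' : ℕ) (f : ℕ → ℕ)
    (hmono : ∀ m n, m < n → n < b → f m < f n)
    (hbound : ∀ n, n < b → f n < b') :
    ∃ A : ℕ → ℕ, A 0 = 0 ∧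
      (∀ l : List (ℕ × ℕ), IsANF l → evalANF l < F b 1 →
        A (evalANF l) = evalANF (l.map fun p => (f p.1, A p.2)) ∧
          IsANF (l.map fun p => (f p.1, A p.2))) ∧
      (∀ m, m < F b 1 → A m < F b' 1) ∧
      (∀ m n, m < n → n < F b 1 → A m < A n) := by
  refine ⟨Amap f, Amap_le_one (by omega), ?_, ?_, ?_⟩
  · exact clause2 hmono hbound
  · intro m hm
    exact (main_lemma hmono hbound m hm).2.1
  · intro m n hmn hn
    exact (main_lemma hmono hbound n hn).2.2 m hmn
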